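/- For each Schubert symbol λⁱ there is at most one equivariant Schubert class corresponding to λⁱ: if x and x' both satisfy (1) support above λⁱ, (2) x|_{λⁱ} = Π_{λʲ∈R(λⁱ)}(Y_{λʲ} − (cⱼ/cᵢ)Y_{λⁱ}), and (3) each restriction x|_{λ^k} is homogeneous of degree ℓ(λⁱ), then x = x'. -/

import Mathlib

open MvPolynomial

set_option linter.unusedSectionVars false
set_option linter.unusedVariables false
set_option linter.unnecessarySimpa false
section Helpers
open MvPolynomial Finset

variable {σ R : Type*} [CommRing R] [IsDomain R] [DecidableEq σ]

/-- substituting anything for `X e` leaves `p` unchanged if `e` does not occur in `p` -/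
lemma aeval_update_of_not_mem (e : σ) (p v : MvPolynomial σ R)
    (hp : ∀ d ∈ p.support, d e = 0) :
    aeval (Function.update X e v) p = p := by
  conv_lhs => rw [p.as_sum]
  conv_rhs => rw [p.as_sum]
  rw [map_sum]
  refine Finset.sum_congr rfl fun d hd => ?_
  rw [aeval_monomial, monomial_eq, algebraMap_eq]
  congr 1
  refine Finsupp.prod_congr fun i hi => ?_
  have hie : i ≠ e := by
    intro h; subst h
    exact (Finsupp.mem_support_iff.mp hi) (hp d hd)
  rw [Function.update_of_ne hie]

lemma killX_eq (e : σ) (p : MvPolynomial σ R) :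
    aeval (Function.update X e (0 : MvPolynomial σ R)) p
      = ∑ d ∈ p.support.filter (fun d => d e = 0), monomial d (coeff d p) := by
  conv_lhs => rw [p.as_sum]
  rw [map_sum, Finset.sum_filter]
  refine Finset.sum_congr rfl fun d _ => ?_
  by_cases hde : d e = 0
  · rw [if_pos hde]
    refine aeval_update_of_not_mem e _ _ (fun d' hd' => ?_)
    rcases Finset.mem_singleton.mp (support_monomial_subset hd') with rfl
    exact hde
  · rw [if_neg hde, aeval_monomial]
    have he : e ∈ d.support := Finsupp.mem_support_iff.mpr hde
    have hz : (d.prod fun i k => (Function.update X e (0 : MvPolynomial σ R)) i ^ k) = 0 := by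
      refine Finset.prod_eq_zero he ?_
      simp only [Function.update_self]
      exact zero_pow hde
    rw [hz, mul_zero]

lemma X_dvd_iff_killX (e : σ) (p : MvPolynomial σ R) :
    (X e : MvPolynomial σ R) ∣ p ↔ aeval (Function.update X e (0 : MvPolynomial σ R)) p = 0 := by
  constructor
  · rintro ⟨t, rfl⟩
    rw [map_mul, aeval_X, Function.update_self, zero_mul]
  · intro h
    rw [killX_eq] at h
    conv_rhs => rw [p.as_sum]
    rw [← Finset.sum_filter_add_sum_filter_not p.support (fun d => d e = 0), h, zero_add]
    refine Finset.dvd_sum fun d hd => ?_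
    rw [Finset.mem_filter] at hd
    rw [X_dvd_monomial]
    exact Or.inr hd.2

lemma prime_X_mv (e : σ) : Prime (X e : MvPolynomial σ R) := by
  refine ⟨X_ne_zero e, ?_, ?_⟩
  · intro h
    have := (X_dvd_iff_killX e (1 : MvPolynomial σ R)).mp h.dvd
    rw [map_one] at this
    exact one_ne_zero this
  · intro a b hab
    rw [X_dvd_iff_killX] at hab
    rw [map_mul] at hab
    rcases mul_eq_zero.mp hab with h | h
    · exact Or.inl ((X_dvd_iff_killX e a).mpr h)
    · exact Or.inr ((X_dvd_iff_killX e b).mpr h)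

/-- A linear polynomial `X e + p` where `e` does not occur in `p` is prime. -/
lemma prime_X_add (e : σ) (p : MvPolynomial σ R) (hp : ∀ d ∈ p.support, d e = 0) :
    Prime (X e + p) := by
  let f : MvPolynomial σ R →ₐ[R] MvPolynomial σ R := aeval (Function.update X e (X e + p))
  let g : MvPolynomial σ R →ₐ[R] MvPolynomial σ R := aeval (Function.update X e (X e - p))
  have hfp : f p = p := aeval_update_of_not_mem e p _ hp
  have hgp : g p = p := aeval_update_of_not_mem e p _ hp
  have hfg : f.comp g = AlgHom.id R _ := by
    refine algHom_ext fun i => ?_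
    by_cases hie : i = e
    · subst hie
      simp only [AlgHom.comp_apply, AlgHom.id_apply, g, f, aeval_X, Function.update_self]
      rw [map_sub, aeval_X, Function.update_self, hfp]
      ring
    · simp only [AlgHom.comp_apply, AlgHom.id_apply, g, f, aeval_X, Function.update_of_ne hie]

  have hgf : g.comp f = AlgHom.id R _ := by
    refine algHom_ext fun i => ?_
    by_cases hie : i = e
    · subst hie
      simp only [AlgHom.comp_apply, AlgHom.id_apply, g, f, aeval_X, Function.update_self]
      rw [map_add, aeval_X, Function.update_self, hgp]
      ring
    · simp only [AlgHom.comp_apply, AlgHom.id_apply, g, f, aeval_X, Function.update_of_ne hie]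

  let E : MvPolynomial σ R ≃* MvPolynomial σ R :=
    { toFun := f, invFun := g,
      left_inv := fun q => AlgHom.congr_fun hgf q,
      right_inv := fun q => AlgHom.congr_fun hfg q,
      map_mul' := map_mul f }
  have hE : E (X e) = X e + p := by
    show f (X e) = X e + p
    rw [aeval_X, Function.update_self]
  have := ((MulEquiv.prime_iff (p := X e) E).mpr (prime_X_mv e))
  rwa [hE] at this


lemma prod_primes_dvd' {α : Type*} [CommMonoidWithZero α] [IsCancelMulZero α] {ι : Type*} [DecidableEq ι]
    (s : Finset ι) (p : ι → α) :
    (∀ i ∈ s, Prime (p i)) → (∀ i ∈ s, ∀ j ∈ s, i ≠ j → ¬ (p i ∣ p j)) →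
    ∀ x : α, (∀ i ∈ s, p i ∣ x) → (∏ i ∈ s, p i) ∣ x := by
  induction s using Finset.induction_on with
  | empty => intro _ _ x _; simpa using one_dvd x
  | insert a s ha ih =>
    intro hp hne x hd
    obtain ⟨t, rfl⟩ := hd a (Finset.mem_insert_self a s)
    rw [Finset.prod_insert ha]
    refine mul_dvd_mul_left _ (ih (fun i hi => hp i (Finset.mem_insert_of_mem hi))
      (fun i hi j hj hij => hne i (Finset.mem_insert_of_mem hi) j (Finset.mem_insert_of_mem hj) hij)
      t (fun i hi => ?_))
    have hia : i ≠ a := fun h => ha (h ▸ hi)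
    have hprime : Prime (p i) := hp i (Finset.mem_insert_of_mem hi)
    have hdvd : p i ∣ p a * t := hd i (Finset.mem_insert_of_mem hi)
    rcases hprime.dvd_mul.mp hdvd with h | h
    · exact absurd h (hne i (Finset.mem_insert_of_mem hi) a (Finset.mem_insert_self a s) hia)
    · exact h

/-- If a homogeneous `P` of degree `L` divides a homogeneous `y` of degree `D`,
then `y = P * g` for a homogeneous `g` of degree `D - L`; if `D < L` then `y = 0`. -/
lemma dvd_homogeneous {σ R : Type*} [CommRing R] {P y : MvPolynomial σ R} {L D : ℕ}
    (hP : P.IsHomogeneous L) (hy : y.IsHomogeneous D) (h : P ∣ y) :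
    ∃ g : MvPolynomial σ R, g.IsHomogeneous (D - L) ∧ y = P * g ∧ (D < L → y = 0) := by
  obtain ⟨g0, rfl⟩ := h
  have h1 : (homogeneousComponent D) (P * g0) = P * g0 := by
    rw [homogeneousComponent_of_mem ((mem_homogeneousSubmodule _ _).mpr hy), if_pos rfl]
  have h2 : P * g0 = ∑ i ∈ Finset.range (g0.totalDegree + 1),
      P * (homogeneousComponent i) g0 := by
    conv_lhs => rw [← sum_homogeneousComponent g0]
    rw [Finset.mul_sum]
  have h3 : P * g0 = ∑ i ∈ Finset.range (g0.totalDegree + 1),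
      (if D = L + i then P * (homogeneousComponent i) g0 else 0) := by
    conv_lhs => rw [← h1, h2]
    rw [map_sum]
    refine Finset.sum_congr rfl fun i _ => ?_
    exact homogeneousComponent_of_mem ((mem_homogeneousSubmodule _ _).mpr
      (hP.mul (homogeneousComponent_isHomogeneous i g0)))
  by_cases hDL : D < L
  · have hz : P * g0 = 0 := by
      rw [h3]
      refine Finset.sum_eq_zero fun i _ => ?_
      rw [if_neg (by omega)]
    exact ⟨0, isHomogeneous_zero _ _ _, by rw [hz, mul_zero], fun _ => hz⟩
  · push_neg at hDL
    refine ⟨(homogeneousComponent (D - L)) g0,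
      homogeneousComponent_isHomogeneous _ _, ?_, fun hlt => absurd hlt (not_lt.mpr hDL)⟩
    have hcond : ∀ i : ℕ, (D = L + i) ↔ (i = D - L) := fun i => by omega
    rw [h3]
    simp_rw [hcond]
    rw [Finset.sum_ite_eq' (Finset.range (g0.totalDegree + 1))
      (D - L) (fun i => P * (homogeneousComponent i) g0)]
    by_cases hin : D - L ∈ Finset.range (g0.totalDegree + 1)
    · rw [if_pos hin]
    · rw [if_neg hin]
      have : (homogeneousComponent (D - L)) g0 = 0 := by
        refine homogeneousComponent_eq_zero _ g0 ?_
        rw [Finset.mem_range] at hin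
        omega
      rw [this, mul_zero]


lemma strictMono_le_apply {n d : ℕ} {f : Fin d → Fin n} (hf : StrictMono f) (i : Fin d) :
    (i : ℕ) ≤ (f i : ℕ) := by
  have : ∀ N : ℕ, ∀ i : Fin d, (i : ℕ) = N → (i : ℕ) ≤ (f i : ℕ) := by
    intro N
    induction N with
    | zero => intro i hi; omega
    | succ N ih =>
      intro i hi
      have hN : N < d := by omega
      have h1 : (⟨N, hN⟩ : Fin d) < i := by
        rw [Fin.lt_def]; simp; omega
      have h2 := hf h1
      have h3 := ih ⟨N, hN⟩ rfl
      rw [Fin.lt_def] at h2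
      simp at h3
      omega
  exact this (i : ℕ) i rfl

lemma enum_le_iff_card {n d : ℕ} {f : Fin d → Fin n} (hf : StrictMono f)
    (i : Fin d) (t : Fin n) :
    f i ≤ t ↔ (i : ℕ) + 1 ≤ ((Finset.image f univ).filter (· ≤ t)).card := by
  constructor
  · intro h
    have hsub : (Finset.Iic i).image f ⊆ (Finset.image f univ).filter (· ≤ t) := by
      intro s hs
      rw [Finset.mem_image] at hs
      obtain ⟨i', hi', rfl⟩ := hs
      rw [Finset.mem_filter]
      exact ⟨Finset.mem_image_of_mem f (Finset.mem_univ _),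
        le_trans (hf.monotone (Finset.mem_Iic.mp hi')) h⟩
    calc (i : ℕ) + 1 = (Finset.Iic i).card := (Fin.card_Iic i).symm
      _ = ((Finset.Iic i).image f).card := (Finset.card_image_of_injective _ hf.injective).symm
      _ ≤ _ := Finset.card_le_card hsub
  · intro h
    by_contra hc
    push_neg at hc
    have hsub : (Finset.image f univ).filter (· ≤ t) ⊆ (Finset.Iio i).image f := by
      intro s hs
      rw [Finset.mem_filter, Finset.mem_image] at hs
      obtain ⟨⟨i', _, rfl⟩, hle⟩ := hs
      refine Finset.mem_image_of_mem f (Finset.mem_Iio.mpr ?_)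
      exact hf.lt_iff_lt.mp (lt_of_le_of_lt hle hc)
    have := Finset.card_le_card hsub
    rw [Finset.card_image_of_injective _ hf.injective, Fin.card_Iio] at this
    omega

/-- If `S` is obtained from `T = image g` by replacing `B ∈ T` with `b ∉ T`, `b < B`,
then the sorted enumeration `f` of `S` is pointwise `≤ g`. -/
lemma enum_le {n d : ℕ} {g f : Fin d → Fin n} (hg : StrictMono g) (hf : StrictMono f)
    (b B : Fin n) (hB : B ∈ Finset.image g univ) (hb : b ∉ Finset.image g univ) (hbB : b < B)
    (hS : Finset.image f univ = insert b ((Finset.image g univ).erase B)) :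
    ∀ i, f i ≤ g i := by
  intro i
  set T := Finset.image g univ with hT
  rw [enum_le_iff_card hf, hS]
  have hgi : (i : ℕ) + 1 ≤ (T.filter (· ≤ g i)).card := (enum_le_iff_card hg i (g i)).mp le_rfl
  refine le_trans hgi (Finset.card_le_card_of_injOn (fun t => if t = B then b else t) ?_ ?_)
  · intro t ht
    rw [Finset.mem_coe, Finset.mem_filter] at ht
    show (if t = B then b else t) ∈ _
    rw [Finset.mem_coe]
    by_cases htB : t = B
    · rw [if_pos htB]
      rw [Finset.mem_filter]
      exact ⟨Finset.mem_insert_self _ _, le_trans hbB.le (htB ▸ ht.2)⟩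
    · rw [if_neg htB, Finset.mem_filter]
      exact ⟨Finset.mem_insert_of_mem (Finset.mem_erase.mpr ⟨htB, ht.1⟩), ht.2⟩
  · intro t1 ht1 t2 ht2 h12
    rw [Finset.coe_filter, Set.mem_setOf_eq] at ht1 ht2
    simp only at h12
    by_cases h1B : t1 = B <;> by_cases h2B : t2 = B
    · rw [h1B, h2B]
    · rw [if_pos h1B, if_neg h2B] at h12
      exact absurd (h12 ▸ ht2.1) hb
    · rw [if_neg h1B, if_pos h2B] at h12
      exact absurd (h12 ▸ ht1.1) hb
    · rwa [if_neg h1B, if_neg h2B] at h12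

/-- counting "down edges": pairs `(q, b)` with `b < g q`, `b ∉ image g`. -/
lemma card_downpairs {n d : ℕ} {g : Fin d → Fin n} (hg : StrictMono g) :
    ((univ : Finset (Fin d)).biUnion (fun q =>
      (univ.filter (fun b : Fin n => b < g q ∧ b ∉ Finset.image g univ)).image
        (fun b => (q, b)))).card = ∑ i : Fin d, ((g i : ℕ) - (i : ℕ)) := by
  set T := Finset.image g univ with hT
  rw [Finset.card_biUnion]
  · refine Finset.sum_congr rfl fun q _ => ?_
    rw [Finset.card_image_of_injective _ (fun a b hab => by simpa using hab)]
    have hBq : univ.filter (fun b : Fin n => b < g q ∧ b ∉ T)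
        = (Finset.Iio (g q)).filter (· ∉ T) := by
      ext t
      simp [Finset.mem_filter, Finset.mem_Iio, and_assoc]
    rw [hBq]
    have hsplit := Finset.card_filter_add_card_filter_not
      (s := Finset.Iio (g q)) (p := (· ∈ T))
    have hIio : (Finset.Iio (g q)).card = (g q : ℕ) := Fin.card_Iio _
    have hmem : (Finset.Iio (g q)).filter (· ∈ T) = (Finset.Iio q).image g := by
      ext t
      simp only [Finset.mem_filter, Finset.mem_Iio, Finset.mem_image, hT,
        Finset.mem_univ, true_and]
      constructor
      · rintro ⟨hlt, q', rfl⟩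
        exact ⟨q', hg.lt_iff_lt.mp hlt, rfl⟩
      · rintro ⟨q', hq', rfl⟩
        exact ⟨hg hq', q', rfl⟩
    have hmemcard : ((Finset.Iio (g q)).filter (· ∈ T)).card = (q : ℕ) := by
      rw [hmem, Finset.card_image_of_injective _ hg.injective, Fin.card_Iio]
    have hne : ((Finset.Iio (g q)).filter (fun x => ¬ x ∈ T)).card
        = (g q : ℕ) - (q : ℕ) := by omega
    convert hne using 2
  · intro q1 _ q2 _ hq
    rw [Function.onFun, Finset.disjoint_left]
    intro p hp1 hp2
    simp only [Finset.mem_image, Finset.mem_filter] at hp1 hp2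
    obtain ⟨b1, _, rfl⟩ := hp1
    obtain ⟨b2, _, h2⟩ := hp2
    exact hq (by rw [← (Prod.mk.injEq ..).mp h2.symm |>.1])


lemma coeff_single_sum_X {n : ℕ} (s : Finset (Fin n)) (t : Fin n) :
    coeff (Finsupp.single t 1) (∑ u ∈ s, (X u : MvPolynomial (Fin n) ℤ))
      = if t ∈ s then 1 else 0 := by
  rw [coeff_sum]
  have : ∀ u ∈ s, coeff (Finsupp.single t 1) (X u : MvPolynomial (Fin n) ℤ)
      = if u = t then 1 else 0 := by
    intro u _
    rw [coeff_X']
    congr 1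
    simp only [eq_iff_iff]
    exact Finsupp.single_left_inj (one_ne_zero)
  rw [Finset.sum_congr rfl this, Finset.sum_ite_eq' s t (fun _ => (1 : ℤ))]

lemma coeff_sum_X_eq_zero {n : ℕ} (s : Finset (Fin n)) (b : Fin n) (hb : b ∉ s)
    (d : Fin n →₀ ℕ) (hd : d b ≠ 0) :
    coeff d (∑ u ∈ s, (X u : MvPolynomial (Fin n) ℤ)) = 0 := by
  rw [coeff_sum]
  refine Finset.sum_eq_zero fun u hu => ?_
  rw [coeff_X']
  rw [if_neg]
  intro h
  have : (Finsupp.single u 1) b = d b := by rw [h]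
  rw [Finsupp.single_apply, if_neg (fun hub => hb (by rwa [hub] at hu))] at this
  exact hd this.symm

/-- The linear factor `Σ_{t∈S} X t - γ Σ_{t∈T} X t` where `S = insert b (T.erase B)` is prime. -/
lemma prime_linear_factor {n : ℕ} (T : Finset (Fin n)) (B b : Fin n)
    (hB : B ∈ T) (hb : b ∉ T) (γ : ℤ) :
    Prime ((∑ u ∈ insert b (T.erase B), X u)
      - C γ * ∑ u ∈ T, (X u : MvPolynomial (Fin n) ℤ)) := by
  have hbe : b ∉ T.erase B := fun h => hb (Finset.mem_of_mem_erase h)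
  rw [Finset.sum_insert hbe]
  have heq : (X b + ∑ u ∈ T.erase B, X u) - C γ * ∑ u ∈ T, (X u : MvPolynomial (Fin n) ℤ)
      = X b + ((∑ u ∈ T.erase B, X u) - C γ * ∑ u ∈ T, X u) := by ring
  rw [heq]
  refine prime_X_add b _ (fun d hd => ?_)
  by_contra hdb
  refine (Finsupp.mem_support_iff.mp hd) ?_
  show coeff d _ = 0
  rw [coeff_sub, coeff_sum_X_eq_zero _ b hbe d hdb, coeff_C_mul,
    coeff_sum_X_eq_zero _ b hb d hdb, mul_zero, sub_zero]

lemma isHomogeneous_linear_factor {n : ℕ} (S T : Finset (Fin n)) (γ : ℤ) :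
    (((∑ u ∈ S, X u) - C γ * ∑ u ∈ T, (X u : MvPolynomial (Fin n) ℤ))).IsHomogeneous 1 := by
  refine MvPolynomial.IsHomogeneous.sub ?_ ?_
  · exact MvPolynomial.IsHomogeneous.sum _ _ _ (fun u _ => isHomogeneous_X _ u)
  · exact (MvPolynomial.IsHomogeneous.sum _ _ _ (fun u _ => isHomogeneous_X _ u)).C_mul γ

lemma linear_factor_nondvd {n : ℕ} (T : Finset (Fin n)) (B1 B2 b1 b2 : Fin n)
    (hB1 : B1 ∈ T) (hB2 : B2 ∈ T) (hb1 : b1 ∉ T) (hb2 : b2 ∉ T) (γ1 γ2 : ℤ)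
    (hne : (b1, B1) ≠ (b2, B2)) :
    ¬ (((∑ u ∈ insert b1 (T.erase B1), X u) - C γ1 * ∑ u ∈ T, (X u : MvPolynomial (Fin n) ℤ))
      ∣ ((∑ u ∈ insert b2 (T.erase B2), X u) - C γ2 * ∑ u ∈ T, X u)) := by
  intro hdvd
  set S1 := insert b1 (T.erase B1) with hS1
  set S2 := insert b2 (T.erase B2) with hS2
  set F1 := (∑ u ∈ S1, X u) - C γ1 * ∑ u ∈ T, (X u : MvPolynomial (Fin n) ℤ) with hF1
  set F2 := (∑ u ∈ S2, X u) - C γ2 * ∑ u ∈ T, (X u : MvPolynomial (Fin n) ℤ) with hF2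
  obtain ⟨g, hg, hfac, -⟩ := dvd_homogeneous (isHomogeneous_linear_factor S1 T γ1)
    (isHomogeneous_linear_factor S2 T γ2) hdvd
  rw [← hF2, ← hF1] at hfac
  have hgC : g = C (coeff 0 g) := by
    have h0 := homogeneousComponent_of_mem ((mem_homogeneousSubmodule _ _).mpr hg) (m := 0)
    rw [if_pos rfl] at h0
    conv_lhs => rw [← h0]
    rw [homogeneousComponent_zero]
  set a := coeff 0 g with ha
  have hE : ∀ t : Fin n, coeff (Finsupp.single t 1) F2 = a * coeff (Finsupp.single t 1) F1 := by
    intro t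
    rw [hfac, hgC, mul_comm F1, coeff_C_mul]
  have hcf : ∀ (S : Finset (Fin n)) (γ : ℤ) (t : Fin n),
      coeff (Finsupp.single t 1) ((∑ u ∈ S, X u) - C γ * ∑ u ∈ T, (X u : MvPolynomial (Fin n) ℤ))
        = (if t ∈ S then 1 else 0) - γ * (if t ∈ T then 1 else 0) := by
    intro S γ t
    rw [coeff_sub, coeff_C_mul, coeff_single_sum_X, coeff_single_sum_X]
  have hB1S1 : B1 ∉ S1 := by
    rw [hS1]
    intro h
    rcases Finset.mem_insert.mp h with h' | h'
    · exact hb1 (h' ▸ hB1)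
    · exact (Finset.mem_erase.mp h').1 rfl
  have hB2S2 : B2 ∉ S2 := by
    rw [hS2]
    intro h
    rcases Finset.mem_insert.mp h with h' | h'
    · exact hb2 (h' ▸ hB2)
    · exact (Finset.mem_erase.mp h').1 rfl
  -- evaluate at t = b2
  have e1 := hE b2
  rw [hF1, hF2, hcf, hcf, if_pos (Finset.mem_insert_self b2 _), if_neg hb2, mul_zero,
    sub_zero] at e1
  have hb2S1 : b2 ∈ S1 := by
    by_contra hc
    rw [if_neg hc] at e1
    norm_num at e1
  have hb21 : b2 = b1 := by
    rcases Finset.mem_insert.mp hb2S1 with h | h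
    · exact h
    · exact absurd (Finset.mem_of_mem_erase h) hb2
  rw [if_pos hb2S1] at e1
  have ha1 : a = 1 := by
    have : (1 : ℤ) = a * (1 - γ1 * 0) := by rw [← e1]
    simpa using this.symm
  have hBne : B1 ≠ B2 := by
    intro h
    exact hne (by rw [hb21, h])
  have hB1S2 : B1 ∈ S2 := by
    rw [hS2]
    exact Finset.mem_insert_of_mem (Finset.mem_erase.mpr ⟨hBne, hB1⟩)
  have hB2S1 : B2 ∈ S1 := by
    rw [hS1]
    exact Finset.mem_insert_of_mem (Finset.mem_erase.mpr ⟨fun h => hBne h.symm, hB2⟩)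
  have e2 := hE B1
  have e3 := hE B2
  rw [hF1, hF2, hcf, hcf, ha1, one_mul, if_neg hB1S1, if_pos hB1S2, if_pos hB1, mul_one] at e2
  rw [hF1, hF2, hcf, hcf, ha1, one_mul, if_neg hB2S2, if_pos hB2S1, if_pos hB2, mul_one] at e3
  omega


lemma insert_erase_ne {n : ℕ} (T : Finset (Fin n)) (B1 B2 b1 b2 : Fin n)
    (hB1 : B1 ∈ T) (hB2 : B2 ∈ T) (hb1 : b1 ∉ T) (hb2 : b2 ∉ T)
    (hne : (b1, B1) ≠ (b2, B2)) :
    insert b1 (T.erase B1) ≠ insert b2 (T.erase B2) := by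
  intro h
  have hb12 : b1 = b2 := by
    have h1 : b1 ∈ insert b2 (T.erase B2) := h ▸ Finset.mem_insert_self b1 _
    rcases Finset.mem_insert.mp h1 with h' | h'
    · exact h'
    · exact absurd (Finset.mem_of_mem_erase h') hb1
  have hB12 : B1 ≠ B2 := fun hB => hne (by rw [hb12, hB])
  have h2 : B2 ∈ insert b1 (T.erase B1) :=
    Finset.mem_insert_of_mem (Finset.mem_erase.mpr ⟨fun hh => hB12 hh.symm, hB2⟩)
  rw [h] at h2
  rcases Finset.mem_insert.mp h2 with h' | h'
  · exact hb2 (h' ▸ hB2)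
  · exact (Finset.mem_erase.mp h').1 rfl


end Helpers

/-- `Y_{λ^r} = Σ_q y_{λ^r_q}` as a polynomial in `ℤ[y₁,...,y_n]`. -/
noncomputable def Ypoly (n d m : ℕ) (lam : Fin (m + 1) → Fin d → Fin n) (r : Fin (m + 1)) :
    MvPolynomial (Fin n) ℤ :=
  ∑ q, MvPolynomial.X (lam r q)

/-- `λʲ ∈ R(λⁱ)`: `λʲ` is obtained from `λⁱ` by a reversal `(k, k')`. -/
def inRev (n d m : ℕ) (lam : Fin (m + 1) → Fin d → Fin n) (i j : Fin (m + 1)) : Prop :=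
  ∃ k k' : Fin n, k ∈ Set.range (lam i) ∧ k' ∉ Set.range (lam i) ∧ k' < k ∧
    Set.range (lam j) = insert k' (Set.range (lam i) \ {k})

open Classical in
/-- Uniqueness of equivariant Schubert classes: in the integral equivariant
cohomology of a divisive weighted Grassmann orbifold (realized as tuples
`(f₀,...,f_m)` of polynomials with the GKM divisibility conditions), any two
classes `x, x'` that are supported above `λ^{i₀}`, restrict at `λ^{i₀}` to
`Π_{λʲ ∈ R(λ^{i₀})} (Y_{λʲ} - (cⱼ/c_{i₀}) Y_{λ^{i₀}})`, and have all
restrictions homogeneous of degree `ℓ(λ^{i₀})`, are equal. -/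
theorem schubert_class_unique (n d a m : ℕ) (hd : 0 < d) (hdn : d < n) (ha : 0 < a)
    (W : Fin n → ℕ)
    (lam : Fin (m + 1) → Fin d → Fin n) (hmono : ∀ r, StrictMono (lam r))
    (henum : ∀ f : Fin d → Fin n, StrictMono f → ∃! r, lam r = f)
    (horder : ∀ r s : Fin (m + 1), (∀ q, lam r q ≤ lam s q) → lam r ≠ lam s → r < s)
    (c : Fin (m + 1) → ℕ) (hc : ∀ r, c r = a + ∑ q, W (lam r q))
    (hdiv : ∀ r : Fin m, c r.succ ∣ c r.castSucc)
    (i0 : Fin (m + 1))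
    (x x' : Fin (m + 1) → MvPolynomial (Fin n) ℤ)
    -- both tuples satisfy the GKM divisibility conditions:
    (hGKM : ∀ i j : Fin (m + 1), j < i →
      ((Finset.image (lam i) Finset.univ) ∩ (Finset.image (lam j) Finset.univ)).card = d - 1 →
      (Ypoly n d m lam j - C ((c j / c i : ℕ) : ℤ) * Ypoly n d m lam i) ∣ (x i - x j))
    (hGKM' : ∀ i j : Fin (m + 1), j < i →
      ((Finset.image (lam i) Finset.univ) ∩ (Finset.image (lam j) Finset.univ)).card = d - 1 →
      (Ypoly n d m lam j - C ((c j / c i : ℕ) : ℤ) * Ypoly n d m lam i) ∣ (x' i - x' j))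
    -- (1) support above `λ^{i₀}`:
    (hsupp : ∀ k, x k ≠ 0 → ∀ q, lam i0 q ≤ lam k q)
    (hsupp' : ∀ k, x' k ≠ 0 → ∀ q, lam i0 q ≤ lam k q)
    -- (2) restriction at `λ^{i₀}`:
    (hdiag : x i0 = ∏ j ∈ Finset.univ.filter (fun j => inRev n d m lam i0 j),
      (Ypoly n d m lam j - C ((c j / c i0 : ℕ) : ℤ) * Ypoly n d m lam i0))
    (hdiag' : x' i0 = ∏ j ∈ Finset.univ.filter (fun j => inRev n d m lam i0 j),
      (Ypoly n d m lam j - C ((c j / c i0 : ℕ) : ℤ) * Ypoly n d m lam i0))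
    -- (3) homogeneity of degree `ℓ(λ^{i₀})`:
    (hhom : ∀ k, (x k).IsHomogeneous (∑ q, ((lam i0 q : ℕ) - (q : ℕ))))
    (hhom' : ∀ k, (x' k).IsHomogeneous (∑ q, ((lam i0 q : ℕ) - (q : ℕ)))) :
    x = x' := by
  classical
  have hYsum : ∀ r : Fin (m + 1), Ypoly n d m lam r
      = ∑ u ∈ Finset.image (lam r) Finset.univ, X u := by
    intro r
    rw [Ypoly]
    exact (Finset.sum_image (fun a _ b _ h => (hmono r).injective h)).symm
  have hlaminj : ∀ r s : Fin (m + 1), lam r = lam s → r = s := by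
    intro r s h
    obtain ⟨t, -, hu⟩ := henum (lam r) (hmono r)
    rw [hu r rfl, hu s h.symm]
  have key : ∀ N : ℕ, ∀ k : Fin (m + 1), (k : ℕ) < N → x k - x' k = 0 := by
    intro N
    induction N with
    | zero => intro k hk; omega
    | succ N ih =>
      intro k hk
      by_cases hkN : (k : ℕ) < N
      · exact ih k hkN
      have IH : ∀ j : Fin (m + 1), j < k → x j - x' j = 0 := by
        intro j hj
        refine ih j ?_
        have := Fin.lt_def.mp hj
        omega
      by_contra hy
      have hki0 : k ≠ i0 := by
        intro h
        subst h
        rw [hdiag, hdiag', sub_self] at hy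
        exact hy rfl
      have habove : ∀ q, lam i0 q ≤ lam k q := by
        by_cases hx0 : x k = 0
        · have hx'0 : x' k ≠ 0 := by
            intro h
            rw [hx0, h, sub_self] at hy
            exact hy rfl
          exact hsupp' k hx'0
        · exact hsupp k hx0
      have hlamne : lam k ≠ lam i0 := fun h => hki0 (hlaminj _ _ h)
      have hq0 : ∃ q0, lam i0 q0 < lam k q0 := by
        by_contra hc0
        push_neg at hc0
        exact hlamne (funext fun q => le_antisymm (hc0 q) (habove q))
      obtain ⟨q0, hq0⟩ := hq0
      set D := ∑ q, ((lam i0 q : ℕ) - (q : ℕ)) with hD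
      set L := ∑ q, ((lam k q : ℕ) - (q : ℕ)) with hL
      have hDL : D < L := by
        refine Finset.sum_lt_sum (fun i _ => ?_) ⟨q0, Finset.mem_univ q0, ?_⟩
        · exact Nat.sub_le_sub_right (habove i) _
        · have h1 : (q0 : ℕ) ≤ (lam i0 q0 : ℕ) := strictMono_le_apply (hmono i0) q0
          have h2 : (lam i0 q0 : ℕ) < (lam k q0 : ℕ) := hq0
          omega
      set T := Finset.image (lam k) Finset.univ with hT
      have hcardT : T.card = d := by
        rw [hT, Finset.card_image_of_injective _ (hmono k).injective, Finset.card_univ,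
          Fintype.card_fin]
      set P : Finset (Fin d × Fin n) := Finset.univ.biUnion (fun q =>
        (Finset.univ.filter (fun b : Fin n => b < lam k q ∧ b ∉ T)).image
          (fun b => (q, b))) with hP
      have hcardP : P.card = L := card_downpairs (hmono k)
      have hPmem : ∀ p : Fin d × Fin n, p ∈ P → p.2 < lam k p.1 ∧ p.2 ∉ T := by
        intro p hp
        rw [hP, Finset.mem_biUnion] at hp
        obtain ⟨q, -, hq⟩ := hp
        rw [Finset.mem_image] at hq
        obtain ⟨b, hb, rfl⟩ := hq
        rw [Finset.mem_filter] at hb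
        exact hb.2
      -- for each down pair there is a Schubert symbol `j < k`
      have hexists : ∀ p : Fin d × Fin n, p ∈ P →
          ∃ j : Fin (m + 1),
            Finset.image (lam j) Finset.univ = insert p.2 (T.erase (lam k p.1)) ∧ j < k := by
        intro p hp
        obtain ⟨hlt, hb⟩ := hPmem p hp
        set S : Finset (Fin n) := insert p.2 (T.erase (lam k p.1)) with hS
        have hBmem : lam k p.1 ∈ T := Finset.mem_image_of_mem _ (Finset.mem_univ _)
        have hbe : p.2 ∉ T.erase (lam k p.1) := fun h => hb (Finset.mem_of_mem_erase h)
        have hcS : S.card = d := by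
          rw [hS, Finset.card_insert_of_notMem hbe, Finset.card_erase_of_mem hBmem, hcardT]
          omega
        set f : Fin d → Fin n := fun i => ((S.orderIsoOfFin hcS) i : Fin n) with hf
        have hfmono : StrictMono f := fun a b hab =>
          Subtype.coe_lt_coe.mpr ((S.orderIsoOfFin hcS).strictMono hab)
        have hrange : Finset.image f Finset.univ = S := by
          ext t
          rw [Finset.mem_image]
          constructor
          · rintro ⟨i, -, rfl⟩
            exact ((S.orderIsoOfFin hcS) i).2
          · intro ht
            refine ⟨(S.orderIsoOfFin hcS).symm ⟨t, ht⟩, Finset.mem_univ _, ?_⟩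
            show ((S.orderIsoOfFin hcS) ((S.orderIsoOfFin hcS).symm ⟨t, ht⟩) : Fin n) = t
            rw [OrderIso.apply_symm_apply]
        obtain ⟨j, hj, -⟩ := henum f hfmono
        have hle : ∀ i, lam j i ≤ lam k i := by
          rw [hj]
          exact enum_le (hmono k) hfmono p.2 (lam k p.1) hBmem hb hlt (hrange.trans hS)
        have hjne : lam j ≠ lam k := by
          intro h
          refine hb ?_
          rw [hT, ← h, hj, hrange, hS]
          exact Finset.mem_insert_self _ _
        exact ⟨j, by rw [hj, hrange, hS], horder j k hle hjne⟩
      set jf : {p // p ∈ P} → Fin (m + 1) := fun z => (hexists z.1 z.2).choose with hjf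
      have hjf1 : ∀ z : {p // p ∈ P}, Finset.image (lam (jf z)) Finset.univ
          = insert z.1.2 (T.erase (lam k z.1.1)) := fun z => (hexists z.1 z.2).choose_spec.1
      have hjf2 : ∀ z, jf z < k := fun z => (hexists z.1 z.2).choose_spec.2
      have hpairne : ∀ z1 z2 : {p // p ∈ P}, z1 ≠ z2 →
          (z1.1.2, lam k z1.1.1) ≠ (z2.1.2, lam k z2.1.1) := by
        intro z1 z2 hne hp
        apply hne
        have h2 := Prod.mk.injEq .. ▸ hp
        rw [Prod.mk.injEq] at hp
        refine Subtype.ext (Prod.ext ((hmono k).injective hp.2) hp.1)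
      have hjfinj : Function.Injective jf := by
        intro z1 z2 h
        by_contra hne
        have h1 := hjf1 z1
        rw [h, hjf1 z2] at h1
        exact insert_erase_ne T (lam k z2.1.1) (lam k z1.1.1) z2.1.2 z1.1.2
          (Finset.mem_image_of_mem _ (Finset.mem_univ _))
          (Finset.mem_image_of_mem _ (Finset.mem_univ _))
          (hPmem z2.1 z2.2).2 (hPmem z1.1 z1.2).2 (hpairne z2 z1 (Ne.symm hne)) h1
      set J : Finset (Fin (m + 1)) := P.attach.image jf with hJ
      have hcardJ : J.card = L := by
        rw [hJ, Finset.card_image_of_injective _ hjfinj, Finset.card_attach, hcardP]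
      set F : Fin (m + 1) → MvPolynomial (Fin n) ℤ := fun j =>
        Ypoly n d m lam j - C ((c j / c k : ℕ) : ℤ) * Ypoly n d m lam k with hF
      have hFform : ∀ z : {p // p ∈ P}, F (jf z)
          = (∑ u ∈ insert z.1.2 (T.erase (lam k z.1.1)), X u)
            - C ((c (jf z) / c k : ℕ) : ℤ) * ∑ u ∈ T, X u := by
        intro z
        rw [hF]
        simp only
        rw [hYsum (jf z), hjf1 z, hYsum k, ← hT]
      have hmemJ : ∀ j ∈ J, ∃ z : {p // p ∈ P}, jf z = j := by
        intro j hj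
        rw [hJ, Finset.mem_image] at hj
        obtain ⟨z, -, hz⟩ := hj
        exact ⟨z, hz⟩
      have hFprime : ∀ j ∈ J, Prime (F j) := by
        intro j hj
        obtain ⟨z, rfl⟩ := hmemJ j hj
        rw [hFform z]
        exact prime_linear_factor T (lam k z.1.1) z.1.2
          (Finset.mem_image_of_mem _ (Finset.mem_univ _)) (hPmem z.1 z.2).2 _
      have hFdvd : ∀ j ∈ J, F j ∣ x k - x' k := by
        intro j hj
        obtain ⟨z, rfl⟩ := hmemJ j hj
        have hcard : ((Finset.image (lam k) Finset.univ)
            ∩ (Finset.image (lam (jf z)) Finset.univ)).card = d - 1 := by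
          rw [← hT, hjf1 z]
          have hTS : T ∩ insert z.1.2 (T.erase (lam k z.1.1)) = T.erase (lam k z.1.1) := by
            ext t
            rw [Finset.mem_inter, Finset.mem_insert, Finset.mem_erase]
            constructor
            · rintro ⟨htT, h | h⟩
              · exact absurd (h ▸ htT) (hPmem z.1 z.2).2
              · exact h
            · rintro ⟨htB, htT⟩
              exact ⟨htT, Or.inr ⟨htB, htT⟩⟩
          rw [hTS, Finset.card_erase_of_mem
            (Finset.mem_image_of_mem _ (Finset.mem_univ _)), hcardT]
        have h1 := hGKM k (jf z) (hjf2 z) hcard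
        have h2 := hGKM' k (jf z) (hjf2 z) hcard
        have h3 := IH (jf z) (hjf2 z)
        have heq : x k - x' k = ((x k - x (jf z)) - (x' k - x' (jf z)))
            + (x (jf z) - x' (jf z)) := by ring
        rw [heq, h3, add_zero]
        exact dvd_sub h1 h2
      have hFnondvd : ∀ j1 ∈ J, ∀ j2 ∈ J, j1 ≠ j2 → ¬ (F j1 ∣ F j2) := by
        intro j1 hj1 j2 hj2 hne
        obtain ⟨z1, rfl⟩ := hmemJ j1 hj1
        obtain ⟨z2, rfl⟩ := hmemJ j2 hj2
        have hzne : z1 ≠ z2 := fun h => hne (by rw [h])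
        rw [hFform z1, hFform z2]
        exact linear_factor_nondvd T (lam k z1.1.1) (lam k z2.1.1) z1.1.2 z2.1.2
          (Finset.mem_image_of_mem _ (Finset.mem_univ _))
          (Finset.mem_image_of_mem _ (Finset.mem_univ _))
          (hPmem z1.1 z1.2).2 (hPmem z2.1 z2.2).2 _ _ (hpairne z1 z2 hzne)
      have hproddvd : (∏ j ∈ J, F j) ∣ x k - x' k :=
        prod_primes_dvd' J F hFprime hFnondvd (x k - x' k) hFdvd
      have hFhom : ∀ j ∈ J, (F j).IsHomogeneous 1 := by
        intro j hj
        rw [hF]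
        simp only
        rw [hYsum j, hYsum k]
        exact isHomogeneous_linear_factor _ _ _
      have hprodhom : (∏ j ∈ J, F j).IsHomogeneous L := by
        have h1 := MvPolynomial.IsHomogeneous.prod J F (fun _ => 1) hFhom
        rwa [Finset.sum_const, smul_eq_mul, mul_one, hcardJ] at h1
      have hyhom : (x k - x' k).IsHomogeneous D := (hhom k).sub (hhom' k)
      obtain ⟨g, -, -, hzero⟩ := dvd_homogeneous hprodhom hyhom hproddvd
      exact hy (hzero hDL)
  funext k
  exact sub_eq_zero.mp (key (m + 1) k k.2)
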